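/- Let u ∈ S(g) be a nonzero semi-invariant with weight λ ∈ g*. Then the Poisson centralizer C(u) = {f ∈ S(g) : {f,u} = 0} equals S(ker λ), the subalgebra of S(g) generated by ker λ, and the Poisson centralizer C_R(u) = {h ∈ R(g) : {h,u} = 0} equals R(ker λ), the subfield of R(g) generated by ker λ. -/

import Mathlib

open MvPolynomial

namespace LiePaper

/-! Basic notions for a finite-dimensional Lie algebra `g` over `k`:
the index, the symmetric algebra `S(g)` identified with `k[xᵢ]` via a basis, its Poisson
bracket, (semi-)invariants, the fraction field `R(g)`, the fundamental semi-invariant,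
algebraic hulls, and the quotient division ring of the enveloping algebra. -/

section Index
variable (k : Type*) [CommRing k] (g : Type*) [LieRing g] [LieAlgebra k g]

/-- The stabiliser `{x ∈ h | ∀ y ∈ h, ξ⁅x,y⁆ = 0}` of a functional `ξ`, relative to a
subspace `h` of the Lie algebra. -/
def relStab (h : Submodule k g) (ξ : Module.Dual k g) : Submodule k g where
  carrier := {x | x ∈ h ∧ ∀ y ∈ h, ξ ⁅x, y⁆ = 0}
  add_mem' := by
    rintro a b ⟨ha, ha'⟩ ⟨hb, hb'⟩
    exact ⟨h.add_mem ha hb, fun y hy => by rw [add_lie, map_add, ha' y hy, hb' y hy, add_zero]⟩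
  zero_mem' := ⟨h.zero_mem, fun y hy => by rw [zero_lie, map_zero]⟩
  smul_mem' := by
    rintro c a ⟨ha, ha'⟩
    exact ⟨h.smul_mem c ha, fun y hy => by rw [smul_lie, map_smul, ha' y hy, smul_zero]⟩

/-- The index of a Lie subalgebra (given as a subspace of `g`): the minimal dimension of
the stabiliser of a linear functional. -/
noncomputable def relIndex (h : Submodule k g) : ℕ :=
  ⨅ ξ : Module.Dual k g, Module.finrank k (relStab k g h ξ)

/-- The index `i(g)` of a Lie algebra: the minimal dimension of the stabiliser
`g(ξ) = {x | ∀ y, ξ⁅x,y⁆ = 0}` of a linear functional `ξ ∈ g*`. -/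
noncomputable def lieIndex : ℕ := relIndex k g ⊤

/-- A Lie algebra is unimodular if `tr (ad x) = 0` for all `x`. -/
def IsUnimodular : Prop := ∀ x : g, LinearMap.trace k g (LieAlgebra.ad k g x) = 0

/-- The linear functional `τ : x ↦ tr(ad x)`. -/
noncomputable def modularWeight : Module.Dual k g :=
  (LinearMap.trace k g) ∘ₗ (LieAlgebra.ad k g : g →ₗ[k] Module.End k g)

/-- `g` is indecomposable if it is not the direct product of two nonzero ideals. -/
def IsIndecomposable : Prop :=
  ¬ ∃ I J : LieIdeal k g, I ≠ ⊥ ∧ J ≠ ⊥ ∧ IsCompl (I : Submodule k g) (J : Submodule k g)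

/-- The derived algebra `[g,g]`, as a subspace. -/
def derivedSubspace : Submodule k g := Submodule.span k {z : g | ∃ x y : g, ⁅x, y⁆ = z}

/-- `g` is almost algebraic if `ad g` contains the semisimple and nilpotent components of
each of its elements. -/
def IsAlmostAlgebraic : Prop :=
  ∀ x : g, ∃ s n : g, LieAlgebra.ad k g x = LieAlgebra.ad k g s + LieAlgebra.ad k g n ∧
    (LieAlgebra.ad k g s).IsSemisimple ∧ IsNilpotent (LieAlgebra.ad k g n) ∧
    Commute (LieAlgebra.ad k g s : Module.End k g) (LieAlgebra.ad k g n)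

end Index

section Poly
variable {k : Type*} [CommRing k] {g : Type*} [LieRing g] [LieAlgebra k g]
variable {ι : Type*} [Fintype ι] [DecidableEq ι]

/-- The linear embedding of `g` into its symmetric algebra `S(g) = k[xᵢ]`,
determined by a basis. -/
noncomputable def toPoly (b : Module.Basis ι k g) (x : g) : MvPolynomial ι k :=
  ∑ i : ι, MvPolynomial.C (b.repr x i) * MvPolynomial.X i

/-- The Poisson bracket on `S(g) = k[x₁,…,xₙ]`:
`{f,h} = ∑ᵢ∑ⱼ [xᵢ,xⱼ] (∂f/∂xᵢ) (∂h/∂xⱼ)`. -/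
noncomputable def pbr (b : Module.Basis ι k g) (f h : MvPolynomial ι k) : MvPolynomial ι k :=
  ∑ i : ι, ∑ j : ι, toPoly b ⁅b i, b j⁆ * pderiv i f * pderiv j h

/-- The adjoint action of `x ∈ g` on `S(g)`, `ad x (f) = {x, f}`. -/
noncomputable def adP (b : Module.Basis ι k g) (x : g) (f : MvPolynomial ι k) : MvPolynomial ι k :=
  pbr b (toPoly b x) f

/-- The Poisson centre `Y(g) = S(g)^g` of the symmetric algebra: the set of invariants. -/
def Ycent (b : Module.Basis ι k g) : Set (MvPolynomial ι k) := {f | ∀ x : g, adP b x f = 0}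

/-- `f` is a semi-invariant of `S(g)` with weight `lam ∈ g*`. -/
def IsSemiInvariant (b : Module.Basis ι k g) (lam : Module.Dual k g) (f : MvPolynomial ι k) : Prop :=
  f ≠ 0 ∧ ∀ x : g, adP b x f = lam x • f

/-- `g` has no proper semi-invariants in `S(g)`. -/
def HasNoProperSemiInvariants (b : Module.Basis ι k g) : Prop :=
  ∀ lam f, IsSemiInvariant b lam f → lam = 0

/-- `Λ(g)`, the set of weights of semi-invariants of `S(g)`. -/
def weightSet (b : Module.Basis ι k g) : Set (Module.Dual k g) :=
  {lam | ∃ f, IsSemiInvariant b lam f}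

/-- The set of semi-invariants of `S(g)`. -/
def semiInvariants (b : Module.Basis ι k g) : Set (MvPolynomial ι k) :=
  {f | ∃ lam, IsSemiInvariant b lam f}

/-- The semi-centre `Sy(g)` of `S(g)`: the subalgebra generated by all semi-invariants. -/
noncomputable def semiCenter (b : Module.Basis ι k g) : Subalgebra k (MvPolynomial ι k) :=
  Algebra.adjoin k (semiInvariants b)

/-- The canonical truncation `g_Λ = ⋂ { ker λ | λ ∈ Λ(g) }`. -/
def truncation (b : Module.Basis ι k g) : Submodule k g :=
  ⨅ lam ∈ weightSet b, LinearMap.ker (lam : Module.Dual k g)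

/-- The copy of `S(h)` inside `S(g)`, for a subspace `h ⊆ g`: the subalgebra generated
by the image of `h`. -/
noncomputable def polySub (b : Module.Basis ι k g) (h : Submodule k g) :
    Subalgebra k (MvPolynomial ι k) :=
  Algebra.adjoin k (toPoly b '' (h : Set g))

/-- The Poisson centre (algebra of invariants) `Y(h)` of `S(h) ⊆ S(g)`, for a Lie
subalgebra `h ⊆ g`. -/
def relYcent (b : Module.Basis ι k g) (h : Submodule k g) : Set (MvPolynomial ι k) :=
  {f | f ∈ polySub b h ∧ ∀ x ∈ h, adP b x f = 0}

/-- The semi-invariants of the Lie subalgebra `h ⊆ g` inside `S(h) ⊆ S(g)`. -/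
def relSemiInvariants (b : Module.Basis ι k g) (h : Submodule k g) : Set (MvPolynomial ι k) :=
  {f | f ∈ polySub b h ∧ f ≠ 0 ∧
    ∃ lam : Module.Dual k g, ∀ x ∈ h, adP b x f = lam x • f}

/-- The relative version of: `h ⊆ g` has no proper semi-invariants (in `S(h)`). -/
def relHasNoProperSemiInvariants (b : Module.Basis ι k g) (h : Submodule k g) : Prop :=
  ∀ (lam : Module.Dual k g) (f : MvPolynomial ι k), f ∈ polySub b h → f ≠ 0 →
    (∀ x ∈ h, adP b x f = lam x • f) → ∀ x ∈ h, lam x = 0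

end Poly

section AlgebraGeneric
variable (R : Type*) {A : Type*} [CommRing R] [CommRing A] [Algebra R A]

/-- A subset of a commutative `R`-algebra "is a polynomial algebra over `R`" if it is the
subalgebra generated by a family of algebraically independent elements. -/
def IsPolynomialAlgebraOn (s : Set A) : Prop :=
  ∃ t : Set A, AlgebraicIndependent R ((↑) : t → A) ∧ (Algebra.adjoin R t : Set A) = s

/-- The transcendence degree over `R` of a subset of a commutative `R`-algebra. -/
noncomputable def trdegOn (s : Set A) : ℕ :=
  sSup {m | ∃ v : Fin m → A, (∀ i, v i ∈ s) ∧ AlgebraicIndependent R v}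

end AlgebraGeneric

section Frac
variable {k : Type*} [Field k] {g : Type*} [LieRing g] [LieAlgebra k g]
variable {ι : Type*} [Fintype ι] [DecidableEq ι]

/-- For a derivation-like operator `δ` of `S(g)` and `h` in the fraction field `R(g)`,
`ratAnn δ h` says that the canonical extension of `δ` to `R(g)` kills `h`:
`h` has a representation `h = f/u` with `δ f * u = f * δ u`. -/
def ratAnn (δ : MvPolynomial ι k → MvPolynomial ι k)
    (h : FractionRing (MvPolynomial ι k)) : Prop :=
  ∃ f u : MvPolynomial ι k, u ≠ 0 ∧
    h * algebraMap (MvPolynomial ι k) (FractionRing (MvPolynomial ι k)) u =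
      algebraMap (MvPolynomial ι k) (FractionRing (MvPolynomial ι k)) f ∧
    δ f * u = f * δ u

/-- The subfield of invariants `R(g)^g` of the rational Poisson algebra `R(g)`,
as a subset of the fraction field of `S(g)`. -/
def ratInv (b : Module.Basis ι k g) : Set (FractionRing (MvPolynomial ι k)) :=
  {h | ∀ x : g, ratAnn (adP b x) h}

/-- The invariants of a Lie subalgebra `h ⊆ g` acting on `R(g)`. -/
def ratInvRel (b : Module.Basis ι k g) (h : Submodule k g) :
    Set (FractionRing (MvPolynomial ι k)) :=
  {q | ∀ x ∈ h, ratAnn (adP b x) q}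

/-- The copy of the field `R(h) ⊆ R(g)` generated by `S(h)`, for a subspace `h ⊆ g`. -/
noncomputable def ratSub (b : Module.Basis ι k g) (h : Submodule k g) :
    Subfield (FractionRing (MvPolynomial ι k)) :=
  Subfield.closure
    (algebraMap (MvPolynomial ι k) (FractionRing (MvPolynomial ι k)) ''
      (polySub b h : Set (MvPolynomial ι k)))

/-- A subset of a field extension of `k` is a rational (purely transcendental) extension
of `k` if it is the subfield generated over `k` by a set of algebraically independent
elements. -/
def IsRationalSetOfField {F : Type*} [Field F] [Algebra k F] (A : Set F) : Prop :=
  ∃ s : Set F, AlgebraicIndependent k ((↑) : s → F) ∧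
    A = (Subfield.closure (Set.range (algebraMap k F) ∪ s) : Set F)

end Frac

section Pfaffian

/-- The Pfaffian of a `2m × 2m` matrix over a commutative algebra over a field `kk`
(of characteristic zero), via the averaged signed sum over permutations. -/
noncomputable def pfaffian (kk : Type*) [Field kk] {S : Type*} [CommRing S] [Algebra kk S]
    {m : ℕ} (A : Matrix (Fin (2 * m)) (Fin (2 * m)) S) : S :=
  algebraMap kk S ((2 ^ m * Nat.factorial m : kk)⁻¹) *
    ∑ σ : Equiv.Perm (Fin (2 * m)),
      (Equiv.Perm.sign σ : ℤ) •
        ∏ i : Fin m, A (σ ⟨2 * (i : ℕ), by omega⟩) (σ ⟨2 * (i : ℕ) + 1, by omega⟩)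

/-- `p` is a greatest common divisor of the set `T`. -/
def IsGCDOf {S : Type*} [CommRing S] (p : S) (T : Set S) : Prop :=
  (∀ q ∈ T, p ∣ q) ∧ ∀ p' : S, (∀ q ∈ T, p' ∣ q) → p' ∣ p

variable {k : Type*} [Field k] {g : Type*} [LieRing g] [LieAlgebra k g]
variable {ι : Type*} [Fintype ι] [DecidableEq ι]

/-- The Pfaffians of the principal `2m' × 2m'` minors of the structure matrix
`([cᵢ,cⱼ])` of the family `c` (inside the Poisson algebra `S(g)`, basis `b`). -/
noncomputable def principalPfaffians (b : Module.Basis ι k g) {d : ℕ} (c : Fin d → g) (m' : ℕ) :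
    Set (MvPolynomial ι k) :=
  {q | ∃ (s : Finset (Fin d)) (hs : s.card = 2 * m'),
      q = pfaffian k (fun i' j' : Fin (2 * m') =>
        toPoly b ⁅c ((s.orderIsoOfFin hs i') : Fin d), c ((s.orderIsoOfFin hs j') : Fin d)⁆)}

/-- `p` is a fundamental semi-invariant of the Lie subalgebra `h ⊆ g`: with
`t = dim h - i(h)`, `p` is a greatest common divisor of the Pfaffians of the principal
`t × t` minors of the structure matrix of `h`. -/
noncomputable def IsFundSemiInvRel (b : Module.Basis ι k g) (h : Submodule k g)
    (p : MvPolynomial ι k) : Prop :=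
  ∃ (d : ℕ) (c : Module.Basis (Fin d) k h) (m' : ℕ),
    d = relIndex k g h + 2 * m' ∧
    IsGCDOf p (principalPfaffians b (fun i => (c i : g)) m')

/-- `p` is a fundamental semi-invariant `p_g` of `g`. -/
noncomputable def IsFundSemiInv (b : Module.Basis ι k g) (p : MvPolynomial ι k) : Prop :=
  IsFundSemiInvRel b ⊤ p

end Pfaffian

section AlgGrp
variable {k : Type*} [Field k] {g : Type*} [LieRing g] [LieAlgebra k g]
variable {ι : Type*} [Fintype ι] [DecidableEq ι]

/-- The polynomial function `p` (on the space of `m × m` matrices) vanishes on the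
subgroup `G ⊆ GL(m,k)`. -/
def VanishesOn {m : Type*} [Fintype m] [DecidableEq m]
    (G : Subgroup (Matrix.GeneralLinearGroup m k)) (p : MvPolynomial (m × m) k) : Prop :=
  ∀ u ∈ G, MvPolynomial.eval (fun ij => (u : Matrix m m k) ij.1 ij.2) p = 0

/-- `G` is a Zariski closed subgroup of `GL(m,k)`. -/
def IsZariskiClosed {m : Type*} [Fintype m] [DecidableEq m]
    (G : Subgroup (Matrix.GeneralLinearGroup m k)) : Prop :=
  ∀ u : Matrix.GeneralLinearGroup m k,
    (∀ p : MvPolynomial (m × m) k, VanishesOn G p →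
      MvPolynomial.eval (fun ij => (u : Matrix m m k) ij.1 ij.2) p = 0) → u ∈ G

/-- The Lie algebra (tangent space at the identity, computed with dual numbers)
of a subgroup `G ⊆ GL(m,k)`, as a set of matrices. -/
noncomputable def lieAlgebraOf {m : Type*} [Fintype m] [DecidableEq m]
    (G : Subgroup (Matrix.GeneralLinearGroup m k)) : Set (Matrix m m k) :=
  {X | ∀ p : MvPolynomial (m × m) k, VanishesOn G p →
    MvPolynomial.aeval (fun ij : m × m =>
      algebraMap k (DualNumber k) ((1 : Matrix m m k) ij.1 ij.2) +
        DualNumber.eps * algebraMap k (DualNumber k) (X ij.1 ij.2)) p = 0}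

/-- The matrix of `ad x` with respect to the basis `b`. -/
noncomputable def adMat (b : Module.Basis ι k g) (x : g) : Matrix ι ι k :=
  LinearMap.toMatrix b b (LieAlgebra.ad k g x)

/-- The algebraic hull `H` of `ad g` inside `gl(g)` (in matrix form, w.r.t. the basis
`b`): the intersection of the Lie algebras of all Zariski closed subgroups of `GL(g)`
whose Lie algebra contains `ad g`; i.e. the smallest algebraic Lie subalgebra of
`Der(g)` containing `ad g`. -/
noncomputable def adHull (b : Module.Basis ι k g) : Set (Matrix ι ι k) :=
  ⋂ G ∈ {G : Subgroup (Matrix.GeneralLinearGroup ι k) |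
      IsZariskiClosed G ∧ Set.range (adMat b) ⊆ lieAlgebraOf G}, lieAlgebraOf G

/-- `g` is ad-algebraic: `ad g` coincides with its algebraic hull. -/
noncomputable def IsAdAlgebraic (b : Module.Basis ι k g) : Prop :=
  adHull b = Set.range (adMat b)

/-- The stabiliser `g[ξ] = {x ∈ g | ξ(Ex) = 0 ∀ E ∈ H}`, `H` the algebraic hull of
`ad g`. -/
noncomputable def altStab (b : Module.Basis ι k g) (ξ : Module.Dual k g) : Submodule k g where
  carrier := {x | ∀ E ∈ adHull b, ξ (Matrix.toLin b b E x) = 0}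
  add_mem' := fun {a c} ha hc E hE => by rw [map_add, map_add, ha E hE, hc E hE, add_zero]
  zero_mem' := fun E hE => by rw [map_zero, map_zero]
  smul_mem' := fun t a ha E hE => by rw [map_smul, map_smul, ha E hE, smul_zero]

/-- The alternative index `j(g)`: the minimal dimension of `g[ξ]`, `ξ ∈ g*`. -/
noncomputable def altIndex (b : Module.Basis ι k g) : ℕ :=
  ⨅ ξ : Module.Dual k g, Module.finrank k (altStab b ξ)

/-- `g` is an algebraic Lie algebra: `g` is (isomorphic to) the Lie algebra of a Zariski
closed subgroup of some `GL(m,k)`. -/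
noncomputable def IsAlgebraicLieAlgebra (k g : Type*) [Field k] [LieRing g]
    [LieAlgebra k g] : Prop :=
  ∃ (m : ℕ) (G : Subgroup (Matrix.GeneralLinearGroup (Fin m) k)), IsZariskiClosed G ∧
    ∃ φ : g →ₗ[k] Matrix (Fin m) (Fin m) k, Function.Injective φ ∧
      (∀ x y : g, φ ⁅x, y⁆ = φ x * φ y - φ y * φ x) ∧ Set.range φ = lieAlgebraOf G

end AlgGrp

section Env
variable (k : Type*) [Field k] (L : Type*) [LieRing L] [LieAlgebra k L]

/-- The adjoint action of `x ∈ L` on the universal enveloping algebra `U(L)`. -/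
noncomputable def adU (x : L) (u : UniversalEnvelopingAlgebra k L) :
    UniversalEnvelopingAlgebra k L :=
  UniversalEnvelopingAlgebra.ι k x * u - u * UniversalEnvelopingAlgebra.ι k x

variable {k L}

/-- `u` is a semi-invariant of `U(L)` with weight `lam ∈ L*`. -/
def IsSemiInvariantU (lam : Module.Dual k L) (u : UniversalEnvelopingAlgebra k L) : Prop :=
  u ≠ 0 ∧ ∀ x : L, adU k L x u = lam x • u

/-- The set of weights of semi-invariants of `U(L)`. -/
def weightSetU (k L : Type*) [Field k] [LieRing L] [LieAlgebra k L] :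
    Set (Module.Dual k L) :=
  {lam | ∃ u, IsSemiInvariantU lam u}

/-- The canonical truncation `L_Λ = ⋂ {ker lam | lam ∈ Λ(L)}`, via the semi-invariants
of the enveloping algebra. -/
def truncationU (k L : Type*) [Field k] [LieRing L] [LieAlgebra k L] : Submodule k L :=
  ⨅ lam ∈ weightSetU k L, LinearMap.ker (lam : Module.Dual k L)

/-- `D`, together with the embedding `φ : U(L) → D`, is the quotient division ring
`D(L)` of `U(L)`: `φ` is injective and every element of `D` has the form
`φ u * (φ v)⁻¹`. -/
def IsQuotientDivisionRing {D : Type*} [DivisionRing D] [Algebra k D]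
    (φ : UniversalEnvelopingAlgebra k L →ₐ[k] D) : Prop :=
  Function.Injective φ ∧
    ∀ d : D, ∃ u v : UniversalEnvelopingAlgebra k L, v ≠ 0 ∧ d * φ v = φ u

end Env

section Div
variable {k : Type*} [Field k] {D : Type*} [DivisionRing D] [Algebra k D]

/-- The division subring (as a set) generated by a subset of a division ring. -/
def divClosure (s : Set D) : Set D :=
  ⋂ T ∈ {T : Set D | s ⊆ T ∧ (1 : D) ∈ T ∧ (∀ a ∈ T, ∀ b ∈ T, a - b ∈ T) ∧
      (∀ a ∈ T, ∀ b ∈ T, a * b ∈ T) ∧ (∀ a ∈ T, a⁻¹ ∈ T)}, T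

/-- The centre of a subset of a ring. -/
def centerOf (s : Set D) : Set D := {z | z ∈ s ∧ ∀ w ∈ s, w * z = z * w}

/-- Evaluation of a (commutative) polynomial at a (possibly noncommuting) family of
elements of a `k`-algebra, using products taken in a fixed order. -/
noncomputable def ncEval {m : ℕ} (v : Fin m → D) (p : MvPolynomial (Fin m) k) : D :=
  ∑ d ∈ p.support, algebraMap k D (MvPolynomial.coeff d p) *
    (List.ofFn fun i : Fin m => v i ^ d i).prod

/-- Algebraic independence over `kk` of a finite family in a possibly noncommutative
`kk`-algebra (intended for pairwise commuting families). -/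
def NCAlgIndep {m : ℕ} (kk : Type*) [Field kk] {D : Type*} [DivisionRing D] [Algebra kk D]
    (v : Fin m → D) : Prop :=
  ∀ p : MvPolynomial (Fin m) kk, ncEval v p = 0 → p = 0

/-- The transcendence degree over `kk` of a subset of a division `kk`-algebra. -/
noncomputable def ncTrdegOn (kk : Type*) [Field kk] {D : Type*} [DivisionRing D]
    [Algebra kk D] (s : Set D) : ℕ :=
  sSup {m | ∃ v : Fin m → D, (∀ i, v i ∈ s) ∧ NCAlgIndep kk v}

/-- The centre `Z(D)` of the division ring `D` is rational (purely transcendental) over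
`kk`: it is generated, as a division subring over `kk`, by a finite family of
algebraically independent elements. -/
def IsRationalCenter (kk D : Type*) [Field kk] [DivisionRing D] [Algebra kk D] : Prop :=
  ∃ (m : ℕ) (v : Fin m → D), (∀ i, v i ∈ Set.center D) ∧ NCAlgIndep kk v ∧
    (Set.center D : Set D) = divClosure (Set.range (algebraMap kk D) ∪ Set.range v)

end Div


section Extra
variable {k : Type*} [Field k] {L : Type*} [LieRing L] [LieAlgebra k L]

/-- The copy of `U(L_Λ)` inside `U(L)`: the subalgebra generated by the image of the
canonical truncation. -/
noncomputable def envTrunc (k L : Type*) [Field k] [LieRing L] [LieAlgebra k L] :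
    Set (UniversalEnvelopingAlgebra k L) :=
  (Algebra.adjoin k ((UniversalEnvelopingAlgebra.ι k) '' (truncationU k L : Set L)) :
    Subalgebra k (UniversalEnvelopingAlgebra k L))

/-- The quotient division ring `D(L_Λ)` of `U(L_Λ)`, realised as the division subring of
`D(L)` generated by `U(L_Λ)`. -/
noncomputable def DTrunc {D : Type*} [DivisionRing D] [Algebra k D]
    (φ : UniversalEnvelopingAlgebra k L →ₐ[k] D) : Set D :=
  divClosure (φ '' envTrunc k L)

/-- A Lie subalgebra `P` of `s` is parabolic if it contains a Borel (i.e. maximal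
solvable) subalgebra of `s`. -/
def IsParabolic (k : Type*) {s : Type*} [CommRing k] [LieRing s] [LieAlgebra k s]
    (P : LieSubalgebra k s) : Prop :=
  ∃ B : LieSubalgebra k s, B ≤ P ∧ LieAlgebra.IsSolvable ↥B ∧
    ∀ B' : LieSubalgebra k s, LieAlgebra.IsSolvable ↥B' → B ≤ B' → B' = B

end Extra

end LiePaper

open LiePaper

section StatementOneAux

open MvPolynomial LiePaper

variable {k : Type*} [Field k] {g : Type*} [LieRing g] [LieAlgebra k g]
variable {ι : Type*} [Fintype ι] [DecidableEq ι]

private theorem toPoly_add (b : Module.Basis ι k g) (x y : g) :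
    toPoly b (x + y) = toPoly b x + toPoly b y := by
  simp [toPoly, map_add, Finsupp.add_apply, add_mul, Finset.sum_add_distrib]

private theorem toPoly_smul (b : Module.Basis ι k g) (r : k) (x : g) :
    toPoly b (r • x) = C r * toPoly b x := by
  simp [toPoly, map_smul, Finsupp.smul_apply, smul_eq_mul, map_mul, Finset.mul_sum, mul_assoc]

private theorem toPoly_sub (b : Module.Basis ι k g) (x y : g) :
    toPoly b (x - y) = toPoly b x - toPoly b y := by
  simp [toPoly, map_sub, Finsupp.sub_apply, sub_mul, Finset.sum_sub_distrib]

private theorem toPoly_basis (b : Module.Basis ι k g) (i : ι) : toPoly b (b i) = X i := by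
  classical
  simp [toPoly, Module.Basis.repr_self, Finsupp.single_apply,
    apply_ite (C : k → MvPolynomial ι k), ite_mul, Finset.sum_ite_eq]

private theorem der_sum_apply {β : Type*} (s : Finset β)
    (F : β → Derivation k (MvPolynomial ι k) (MvPolynomial ι k)) (f : MvPolynomial ι k) :
    (∑ i ∈ s, F i) f = ∑ i ∈ s, F i f := by
  classical
  induction s using Finset.cons_induction with
  | empty => simp
  | cons a s ha ih => rw [Finset.sum_cons, Finset.sum_cons, Derivation.add_apply, ih]

/-- The Poisson bracket against `u`, `f ↦ {f,u}`, as a derivation. -/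
private noncomputable def pbrDer (b : Module.Basis ι k g) (u : MvPolynomial ι k) :
    Derivation k (MvPolynomial ι k) (MvPolynomial ι k) :=
  ∑ i : ι, ∑ j : ι, (toPoly b ⁅b i, b j⁆ * pderiv j u) • pderiv i

private theorem pbrDer_apply (b : Module.Basis ι k g) (u f : MvPolynomial ι k) :
    pbrDer b u f = pbr b f u := by
  rw [pbrDer, pbr, der_sum_apply]
  refine Finset.sum_congr rfl fun i _ => ?_
  rw [der_sum_apply]
  refine Finset.sum_congr rfl fun j _ => ?_
  rw [Derivation.smul_apply, smul_eq_mul]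
  ring

/-- Conjugating a derivation by an algebra isomorphism. -/
private noncomputable def conjDer {A B : Type*} [CommRing A] [CommRing B] [Algebra k A]
    [Algebra k B] (e : A ≃ₐ[k] B) (D : Derivation k B B) : Derivation k A A where
  toLinearMap := e.symm.toLinearMap ∘ₗ D.toLinearMap ∘ₗ e.toLinearMap
  map_one_eq_zero' := by simp
  leibniz' a b := by
    simp only [LinearMap.coe_comp, Function.comp_apply, AlgEquiv.toLinearMap_apply,
      Derivation.coeFn_coe, map_mul, Derivation.leibniz, smul_eq_mul, map_add,
      AlgEquiv.symm_apply_apply]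
    try ring

private theorem conjDer_apply {A B : Type*} [CommRing A] [CommRing B] [Algebra k A]
    [Algebra k B] (e : A ≃ₐ[k] B) (D : Derivation k B B) (a : A) :
    conjDer e D a = e.symm (D (e a)) := rfl

variable (k) in
/-- Splitting off the variable `i₀`. -/
private noncomputable def Eiso (i₀ : ι) :
    MvPolynomial ι k ≃ₐ[k] Polynomial (MvPolynomial {j : ι // j ≠ i₀} k) :=
  (renameEquiv k (Equiv.optionSubtypeNe i₀).symm).trans (optionEquivLeft k {j : ι // j ≠ i₀})

private theorem Eiso_X_self (i₀ : ι) : Eiso k i₀ (X i₀) = Polynomial.X := by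
  simp [Eiso, renameEquiv_apply, rename_X, Equiv.optionSubtypeNe_symm_self,
    optionEquivLeft_X_none]

private theorem Eiso_X_ne {i i₀ : ι} (h : i ≠ i₀) :
    Eiso k i₀ (X i) = Polynomial.C (X ⟨i, h⟩) := by
  simp [Eiso, renameEquiv_apply, rename_X, Equiv.optionSubtypeNe_symm_of_ne h,
    optionEquivLeft_X_some]

private theorem Eiso_pderiv (i₀ : ι) (p : MvPolynomial ι k) :
    Eiso k i₀ (pderiv i₀ p) = Polynomial.derivative (Eiso k i₀ p) := by
  have hD : (pderiv i₀ : Derivation k (MvPolynomial ι k) (MvPolynomial ι k)) =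
      conjDer (Eiso k i₀) (Polynomial.derivative'.restrictScalars k) := by
    apply MvPolynomial.derivation_ext
    intro i
    by_cases hi : i = i₀
    · subst hi
      rw [conjDer_apply, Eiso_X_self]
      try rw [pderiv_X_self]
      try simp
    · rw [conjDer_apply, Eiso_X_ne hi, pderiv_X_of_ne hi]
      simp
  have h1 : pderiv i₀ p = (Eiso k i₀).symm (Polynomial.derivative (Eiso k i₀ p)) := by
    rw [hD]; rfl
  rw [h1, AlgEquiv.apply_symm_apply]

private theorem Eiso_aeval (i₀ : ι) (q : MvPolynomial {j : ι // j ≠ i₀} k) :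
    Eiso k i₀ (aeval (fun j : {j : ι // j ≠ i₀} => (X (j : ι) : MvPolynomial ι k)) q) =
      Polynomial.C q := by
  let CkA : MvPolynomial {j : ι // j ≠ i₀} k →ₐ[k]
      Polynomial (MvPolynomial {j : ι // j ≠ i₀} k) :=
    { toRingHom := Polynomial.C
      commutes' := fun r => (Polynomial.algebraMap_apply _).symm }
  have h : ((Eiso k i₀).toAlgHom.comp
      (aeval (fun j : {j : ι // j ≠ i₀} => (X (j : ι) : MvPolynomial ι k)))) = CkA := by
    apply MvPolynomial.algHom_ext
    intro j
    simp only [AlgHom.coe_comp, Function.comp_apply, aeval_X, AlgEquiv.toAlgHom_eq_coe,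
      AlgHom.coe_coe]
    show Eiso k i₀ (X (j : ι)) = CkA (X j)
    rw [Eiso_X_ne j.2]
    rfl
  exact DFunLike.congr_fun h q

private theorem Eiso_symm_C (i₀ : ι) (q : MvPolynomial {j : ι // j ≠ i₀} k) :
    (Eiso k i₀).symm (Polynomial.C q) =
      aeval (fun j : {j : ι // j ≠ i₀} => (X (j : ι) : MvPolynomial ι k)) q := by
  rw [← Eiso_aeval i₀ q, AlgEquiv.symm_apply_apply]

private theorem exists_of_pderiv_eq_zero [CharZero k] {i₀ : ι} {p : MvPolynomial ι k}
    (h : pderiv i₀ p = 0) :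
    ∃ q : MvPolynomial {j : ι // j ≠ i₀} k,
      p = aeval (fun j : {j : ι // j ≠ i₀} => (X (j : ι) : MvPolynomial ι k)) q := by
  have hdz : Polynomial.derivative (Eiso k i₀ p) = 0 := by
    rw [← Eiso_pderiv, h, map_zero]
  have hC := Polynomial.eq_C_of_derivative_eq_zero hdz
  refine ⟨(Eiso k i₀ p).coeff 0, ?_⟩
  apply (Eiso k i₀).injective
  rw [Eiso_aeval]
  exact hC

private theorem reduce_quotient [CharZero k] (i₀ : ι) (f v : MvPolynomial ι k) (hv : v ≠ 0)
    (hcond : pderiv i₀ f * v = f * pderiv i₀ v) :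
    ∃ f₀ v₀ : MvPolynomial ι k, v₀ ≠ 0 ∧ pderiv i₀ f₀ = 0 ∧ pderiv i₀ v₀ = 0 ∧
      f * v₀ = f₀ * v := by
  by_cases hf : f = 0
  · exact ⟨0, 1, one_ne_zero, by simp, by simp, by simp [hf]⟩
  obtain ⟨f', v', c, hrel, hcf, hcv⟩ :=
    UniqueFactorizationMonoid.exists_reduced_factors f hf v
  have hc : c ≠ 0 := fun h => hf (by rw [← hcf, h, zero_mul])
  have hv' : v' ≠ 0 := fun h => hv (by rw [← hcv, h, mul_zero])
  have hcond' : pderiv i₀ f' * v' = f' * pderiv i₀ v' := by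
    have e1 := hcond
    rw [← hcf, ← hcv, pderiv_mul, pderiv_mul] at e1
    have h2 : c * c * (pderiv i₀ f' * v') = c * c * (f' * pderiv i₀ v') := by
      linear_combination e1
    exact mul_left_cancel₀ (mul_ne_zero hc hc) h2
  have hdv : pderiv i₀ v' = 0 := by
    by_contra hdvne
    have hdvd : v' ∣ pderiv i₀ v' := by
      refine hrel.symm.dvd_of_dvd_mul_left ⟨pderiv i₀ f', ?_⟩
      rw [← hcond']; ring
    obtain ⟨w, hw⟩ := hdvd
    have hP : Eiso k i₀ v' ≠ 0 := fun h0 =>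
      hv' (by simpa using (Eiso k i₀).injective (h0.trans (map_zero _).symm))
    have hder : Polynomial.derivative (Eiso k i₀ v') = Eiso k i₀ v' * Eiso k i₀ w := by
      rw [← Eiso_pderiv, hw, map_mul]
    have hderne : Polynomial.derivative (Eiso k i₀ v') ≠ 0 := by
      rw [← Eiso_pderiv]
      exact fun h0 => hdvne (by simpa using (Eiso k i₀).injective (h0.trans (map_zero _).symm))
    have hnd : (Eiso k i₀ v').natDegree ≠ 0 := by
      intro h0
      exact hderne (by rw [Polynomial.eq_C_of_natDegree_eq_zero h0, Polynomial.derivative_C])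
    have hlt := Polynomial.natDegree_derivative_lt hnd
    have hw0 : Eiso k i₀ w ≠ 0 := fun h0 => hderne (by rw [hder, h0, mul_zero])
    have hge : (Eiso k i₀ v').natDegree ≤ (Polynomial.derivative (Eiso k i₀ v')).natDegree := by
      rw [hder, Polynomial.natDegree_mul hP hw0]
      exact Nat.le_add_right _ _
    omega
  have hdf : pderiv i₀ f' = 0 := by
    have h0 : pderiv i₀ f' * v' = 0 := by rw [hcond', hdv, mul_zero]
    rcases mul_eq_zero.mp h0 with h | h
    · exact h
    · exact absurd h hv'
  exact ⟨f', v', hv', hdf, hdv, by rw [← hcf, ← hcv]; ring⟩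

private theorem easy_dir (b : Module.Basis ι k g) (u : MvPolynomial ι k) (lam : Module.Dual k g)
    (hu : ∀ x : g, adP b x u = lam x • u) {f : MvPolynomial ι k}
    (hf : f ∈ polySub b (LinearMap.ker lam)) : pbr b f u = 0 := by
  have h0 : Set.EqOn (pbrDer b u) (0 : Derivation k (MvPolynomial ι k) (MvPolynomial ι k))
      (toPoly b '' ((LinearMap.ker lam : Submodule k g) : Set g)) := by
    rintro _ ⟨x, hx, rfl⟩
    have h1 : pbrDer b u (toPoly b x) = lam x • u := by
      rw [pbrDer_apply]; exact hu x
    rw [h1, Derivation.zero_apply, LinearMap.mem_ker.mp hx, zero_smul]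
  have h2 := Derivation.eqOn_adjoin h0 hf
  rw [← pbrDer_apply b u f]
  simpa using h2

set_option maxHeartbeats 4000000 in
private theorem aux_main [CharZero k] (b : Module.Basis ι k g) (u : MvPolynomial ι k)
    (lam : Module.Dual k g) (hu : ∀ x : g, adP b x u = lam x • u) (hu0 : u ≠ 0)
    (i₀ : ι) (hc0 : lam (b i₀) ≠ 0) :
    (∀ f : MvPolynomial ι k, pbr b f u = 0 → f ∈ polySub b (LinearMap.ker lam)) ∧
    (∀ f v : MvPolynomial ι k, v ≠ 0 → pbr b f u * v = f * pbr b v u →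
      ∃ f₀ v₀ : MvPolynomial ι k, v₀ ≠ 0 ∧ f₀ ∈ polySub b (LinearMap.ker lam) ∧
        v₀ ∈ polySub b (LinearMap.ker lam) ∧ f * v₀ = f₀ * v) := by
  classical
  set c := lam (b i₀) with hcdef
  set b' : ι → g := fun i => if i = i₀ then c⁻¹ • b i₀ else b i - (c⁻¹ * lam (b i)) • b i₀
    with hb'
  set b'' : ι → g := fun i => if i = i₀ then c • b i₀ else b i + lam (b i) • b i₀ with hb''
  have hY : ∀ i, toPoly b (b' i) =
      if i = i₀ then C c⁻¹ * X i₀ else X i - C (c⁻¹ * lam (b i)) * X i₀ := by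
    intro i
    by_cases hi : i = i₀ <;>
      simp [hb', hi, toPoly_smul, toPoly_sub, toPoly_basis]
  have hZ : ∀ i, toPoly b (b'' i) =
      if i = i₀ then C c * X i₀ else X i + C (lam (b i)) * X i₀ := by
    intro i
    by_cases hi : i = i₀ <;>
      simp [hb'', hi, toPoly_smul, toPoly_add, toPoly_basis]
  have hkerb' : ∀ i, i ≠ i₀ → b' i ∈ LinearMap.ker lam := by
    intro i hi
    rw [LinearMap.mem_ker, hb']
    simp only [if_neg hi, map_sub, map_smul, smul_eq_mul]
    rw [← hcdef]
    field_simp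
    ring
  have hlamb' : ∀ i, lam (b' i) = if i = i₀ then 1 else 0 := by
    intro i
    by_cases hi : i = i₀
    · have hbv : b' i = c⁻¹ • b i₀ := by rw [hb']; simp [hi]
      rw [hbv, if_pos hi, map_smul, smul_eq_mul, ← hcdef, inv_mul_cancel₀ hc0]
    · rw [if_neg hi]
      exact LinearMap.mem_ker.mp (hkerb' i hi)
  set θ : MvPolynomial ι k →ₐ[k] MvPolynomial ι k := aeval (fun i => toPoly b (b' i)) with hθ
  set θ' : MvPolynomial ι k →ₐ[k] MvPolynomial ι k := aeval (fun i => toPoly b (b'' i))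
    with hθ'
  have hCC : (C c⁻¹ : MvPolynomial ι k) * C c = 1 := by
    rw [← map_mul, inv_mul_cancel₀ hc0, map_one]
  have hθX : ∀ i, θ (X i) = toPoly b (b' i) := fun i => aeval_X _ i
  have hθ'X : ∀ i, θ' (X i) = toPoly b (b'' i) := fun i => aeval_X _ i
  have hids : θ.comp θ' = AlgHom.id k (MvPolynomial ι k) := by
    apply MvPolynomial.algHom_ext
    intro i
    rw [AlgHom.comp_apply, AlgHom.id_apply, hθ'X, hZ]
    by_cases hi : i = i₀
    · subst hi
      rw [if_pos rfl, map_mul, hθX, hY, if_pos rfl]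
      have hCc : θ (C c) = C c := by rw [hθ, aeval_C, algebraMap_eq]
      rw [hCc, ← mul_assoc, ← map_mul, mul_inv_cancel₀ hc0, map_one, one_mul]
    · rw [if_neg hi, map_add, map_mul, hθX, hθX, hY, hY, if_neg hi, if_pos rfl]
      have hCl : θ (C (lam (b i))) = C (lam (b i)) := by rw [hθ, aeval_C, algebraMap_eq]
      rw [hCl, map_mul]
      ring
  have hids' : θ'.comp θ = AlgHom.id k (MvPolynomial ι k) := by
    apply MvPolynomial.algHom_ext
    intro i
    rw [AlgHom.comp_apply, AlgHom.id_apply, hθX, hY]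
    by_cases hi : i = i₀
    · subst hi
      rw [if_pos rfl, map_mul, hθ'X, hZ, if_pos rfl]
      have hCc : θ' (C c⁻¹) = C c⁻¹ := by rw [hθ', aeval_C, algebraMap_eq]
      rw [hCc, ← mul_assoc, hCC, one_mul]
    · rw [if_neg hi, map_sub, map_mul, hθ'X, hθ'X, hZ, hZ, if_neg hi, if_pos rfl]
      have hCl : θ' (C (c⁻¹ * lam (b i))) = C (c⁻¹ * lam (b i)) := by
        rw [hθ', aeval_C, algebraMap_eq]
      rw [hCl, map_mul]
      linear_combination -((C (lam (b i)) * X i₀ : MvPolynomial ι k) * hCC)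
  set θe : MvPolynomial ι k ≃ₐ[k] MvPolynomial ι k := AlgEquiv.ofAlgHom θ θ' hids hids'
    with hθe
  have hθe_apply : ∀ p, θe p = θ p := fun p => rfl
  have hθe_symm : ∀ p, θe.symm p = θ' p := fun p => rfl
  have hθθ' : ∀ p, θ (θ' p) = p := fun p => by
    simpa using DFunLike.congr_fun hids p
  have hθ'θ : ∀ p, θ' (θ p) = p := fun p => by
    simpa using DFunLike.congr_fun hids' p
  set D := pbrDer b u with hDdef
  have hD : ∀ f, D f = pbr b f u := fun f => pbrDer_apply b u f
  have hDto : ∀ x : g, D (toPoly b x) = lam x • u := fun x => by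
    rw [hD]; exact hu x
  set E := conjDer θe D with hEdef
  set u' := θ' u with hu'def
  have hu'0 : u' ≠ 0 := fun h =>
    hu0 (by simpa [hu'def, hθθ'] using congrArg θ (h.trans (map_zero θ').symm))
  have hEX : E = u' • (pderiv i₀ : Derivation k (MvPolynomial ι k) (MvPolynomial ι k)) := by
    apply MvPolynomial.derivation_ext
    intro i
    have h2 : E (X i) = θ' (D (toPoly b (b' i))) := by
      rw [hEdef, conjDer_apply, hθe_symm, hθe_apply, hθX]
    rw [h2, hDto, map_smul, Derivation.smul_apply]
    by_cases hi : i = i₀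
    · subst hi
      rw [hlamb', if_pos rfl, pderiv_X_self, one_smul]
      simp [hu'def]
    · rw [hlamb', if_neg hi, pderiv_X_of_ne hi, zero_smul, smul_zero]
  have hmem : ∀ p : MvPolynomial ι k, pderiv i₀ (θ' p) = 0 →
      p ∈ polySub b (LinearMap.ker lam) := by
    intro p hp
    obtain ⟨q, hq⟩ := exists_of_pderiv_eq_zero hp
    have hpθ : p = θ (aeval (fun j : {j : ι // j ≠ i₀} => (X (j : ι) : MvPolynomial ι k)) q) := by
      rw [← hq, hθθ']
    have hθq : θ (aeval (fun j : {j : ι // j ≠ i₀} => (X (j : ι) : MvPolynomial ι k)) q) =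
        aeval (fun j : {j : ι // j ≠ i₀} => toPoly b (b' (j : ι))) q := by
      rw [comp_aeval_apply]
      simp only [hθX]
    rw [hpθ, hθq]
    have hrange := Algebra.adjoin_range_eq_range_aeval k
      (fun j : {j : ι // j ≠ i₀} => toPoly b (b' (j : ι)))
    have hsub : Algebra.adjoin k
        (Set.range fun j : {j : ι // j ≠ i₀} => toPoly b (b' (j : ι))) ≤
        polySub b (LinearMap.ker lam) := by
      rw [Algebra.adjoin_le_iff]
      rintro _ ⟨j, rfl⟩
      exact Algebra.subset_adjoin ⟨b' (j : ι), hkerb' (j : ι) j.2, rfl⟩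
    refine hsub ?_
    rw [hrange]
    exact ⟨q, rfl⟩
  have hDθ' : ∀ p, θ' (pbr b p u) = u' * pderiv i₀ (θ' p) := by
    intro p
    have h1 : θ' (D p) = E (θ' p) := by
      rw [hEdef, conjDer_apply, hθe_symm, hθe_apply, hθθ']
    rw [← hD p, h1, hEX, Derivation.smul_apply, smul_eq_mul]
  constructor
  · intro f hf
    apply hmem
    have h1 : u' * pderiv i₀ (θ' f) = 0 := by
      rw [← hDθ', hf, map_zero]
    rcases mul_eq_zero.mp h1 with h | h
    · exact absurd h hu'0
    · exact h
  · intro f v hv hcond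
    have hg2 : θ' v ≠ 0 := fun h =>
      hv (by simpa [hθθ'] using congrArg θ (h.trans (map_zero θ').symm))
    have hcond2 : pderiv i₀ (θ' f) * θ' v = θ' f * pderiv i₀ (θ' v) := by
      have e1 : θ' (pbr b f u) * θ' v = θ' f * θ' (pbr b v u) := by
        rw [← map_mul, ← map_mul, hcond]
      rw [hDθ', hDθ'] at e1
      apply mul_left_cancel₀ hu'0
      linear_combination e1
    obtain ⟨f₀', v₀', hv₀', hdf₀, hdv₀, heq⟩ := reduce_quotient i₀ (θ' f) (θ' v) hg2 hcond2
    refine ⟨θ f₀', θ v₀', ?_, ?_, ?_, ?_⟩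
    · exact fun h => hv₀' (by simpa [hθ'θ] using congrArg θ' (h.trans (map_zero θ).symm))
    · apply hmem
      rw [hθ'θ]
      exact hdf₀
    · apply hmem
      rw [hθ'θ]
      exact hdv₀
    · have h3 := congrArg θ heq
      rw [map_mul, map_mul, hθθ', hθθ'] at h3
      exact h3

set_option maxHeartbeats 1000000 in
/-- The set of elements of the fraction field killed by the extension of a derivation,
as a subfield. -/
private noncomputable def ratAnnSubfield
    (D : Derivation k (MvPolynomial ι k) (MvPolynomial ι k)) :
    Subfield (FractionRing (MvPolynomial ι k)) where
  carrier := {h | ∃ f v : MvPolynomial ι k, v ≠ 0 ∧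
    h * algebraMap (MvPolynomial ι k) (FractionRing (MvPolynomial ι k)) v =
      algebraMap (MvPolynomial ι k) (FractionRing (MvPolynomial ι k)) f ∧
    D f * v = f * D v}
  zero_mem' := ⟨0, 1, one_ne_zero, by simp, by simp⟩
  one_mem' := ⟨1, 1, one_ne_zero, by simp, by simp⟩
  add_mem' := by
    rintro a bb ⟨f₁, v₁, hv₁, hr₁, hc₁⟩ ⟨f₂, v₂, hv₂, hr₂, hc₂⟩
    refine ⟨f₁ * v₂ + f₂ * v₁, v₁ * v₂, mul_ne_zero hv₁ hv₂, ?_, ?_⟩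
    · rw [RingHom.map_mul, RingHom.map_add, RingHom.map_mul, RingHom.map_mul]
      linear_combination (algebraMap (MvPolynomial ι k) (FractionRing (MvPolynomial ι k)) v₂) * hr₁
        + (algebraMap (MvPolynomial ι k) (FractionRing (MvPolynomial ι k)) v₁) * hr₂
    · simp only [map_add, Derivation.leibniz, smul_eq_mul]
      linear_combination v₂ ^ 2 * hc₁ + v₁ ^ 2 * hc₂
  mul_mem' := by
    rintro a bb ⟨f₁, v₁, hv₁, hr₁, hc₁⟩ ⟨f₂, v₂, hv₂, hr₂, hc₂⟩
    refine ⟨f₁ * f₂, v₁ * v₂, mul_ne_zero hv₁ hv₂, ?_, ?_⟩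
    · rw [RingHom.map_mul, RingHom.map_mul]
      linear_combination (bb * algebraMap (MvPolynomial ι k) (FractionRing (MvPolynomial ι k)) v₂)
          * hr₁
        + (algebraMap (MvPolynomial ι k) (FractionRing (MvPolynomial ι k)) f₁) * hr₂
    · simp only [Derivation.leibniz, smul_eq_mul]
      linear_combination (f₂ * v₂) * hc₁ + (f₁ * v₁) * hc₂
  neg_mem' := by
    rintro a ⟨f₁, v₁, hv₁, hr₁, hc₁⟩
    refine ⟨-f₁, v₁, hv₁, ?_, ?_⟩
    · rw [RingHom.map_neg]
      linear_combination -hr₁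
    · rw [map_neg]
      linear_combination -hc₁
  inv_mem' := by
    intro a ha
    obtain ⟨f₁, v₁, hv₁, hr₁, hc₁⟩ := ha
    by_cases ha0 : a = 0
    · exact ⟨0, 1, one_ne_zero, by simp [ha0], by simp⟩
    have halgv : algebraMap (MvPolynomial ι k) (FractionRing (MvPolynomial ι k)) v₁ ≠ 0 := by
      rw [Ne, IsFractionRing.to_map_eq_zero_iff]
      exact hv₁
    have hf₁ : f₁ ≠ 0 := by
      intro h0
      rw [h0, map_zero] at hr₁
      rcases mul_eq_zero.mp hr₁ with h | h
      · exact ha0 h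
      · exact halgv h
    refine ⟨v₁, f₁, hf₁, ?_, ?_⟩
    · rw [← hr₁, ← mul_assoc, inv_mul_cancel₀ ha0, one_mul]
    · linear_combination -hc₁

private theorem mem_ratAnnSubfield
    {D : Derivation k (MvPolynomial ι k) (MvPolynomial ι k)}
    {h : FractionRing (MvPolynomial ι k)} :
    h ∈ ratAnnSubfield D ↔ ratAnn (fun f => D f) h := by
  constructor
  · rintro ⟨f, v, h1, h2, h3⟩; exact ⟨f, v, h1, h2, h3⟩
  · rintro ⟨f, v, h1, h2, h3⟩; exact ⟨f, v, h1, h2, h3⟩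

end StatementOneAux


/-- Lemma 3.  If `u ∈ S(g)` is a nonzero semi-invariant with weight
`λ ∈ g*`, then the Poisson centraliser of `u` in `S(g)` is `S(ker λ)` and the Poisson
centraliser of `u` in `R(g)` is `R(ker λ)`. -/
theorem statement_1 {k : Type*} [Field k] [IsAlgClosed k] [CharZero k]
    {g : Type*} [LieRing g] [LieAlgebra k g]
    {ι : Type*} [Fintype ι] [DecidableEq ι] (b : Module.Basis ι k g)
    (u : MvPolynomial ι k) (lam : Module.Dual k g) (hu : IsSemiInvariant b lam u) :
    {f : MvPolynomial ι k | pbr b f u = 0} =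
      (polySub b (LinearMap.ker lam) : Set (MvPolynomial ι k)) ∧
    {h : FractionRing (MvPolynomial ι k) | ratAnn (fun f => pbr b f u) h} =
      (ratSub b (LinearMap.ker lam) : Set (FractionRing (MvPolynomial ι k))) := by
    classical
  obtain ⟨hu0, hux⟩ := hu
  by_cases hlam : lam = 0
  · subst hlam
    have hD0 : pbrDer b u = 0 := by
      apply MvPolynomial.derivation_ext
      intro i
      rw [← toPoly_basis b i]
      have h1 : pbrDer b u (toPoly b (b i)) = (0 : Module.Dual k g) (b i) • u := by
        rw [pbrDer_apply]; exact hux (b i)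
      rw [h1]
      simp
    have hpbr0 : ∀ f, pbr b f u = 0 := fun f => by
      rw [← pbrDer_apply, hD0, Derivation.zero_apply]
    have htop : ∀ h : Submodule k g, h = ⊤ → polySub b h = ⊤ := by
      rintro _ rfl
      rw [eq_top_iff, ← MvPolynomial.adjoin_range_X]
      rw [Algebra.adjoin_le_iff]
      rintro _ ⟨i, rfl⟩
      exact Algebra.subset_adjoin ⟨b i, by simp, toPoly_basis b i⟩
    have hker0 : polySub b (LinearMap.ker (0 : Module.Dual k g)) = ⊤ :=
      htop _ LinearMap.ker_zero
    constructor
    · ext f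
      simp only [Set.mem_setOf_eq, SetLike.mem_coe, hpbr0, hker0]
      simp [Algebra.mem_top]
    · ext h
      simp only [Set.mem_setOf_eq, SetLike.mem_coe]
      constructor
      · intro _
        obtain ⟨p, q, hq, hrep⟩ := IsFractionRing.div_surjective (A := MvPolynomial ι k) h
        rw [← hrep]
        apply Subfield.div_mem
        · exact Subfield.subset_closure ⟨p, by rw [hker0]; exact Algebra.mem_top, rfl⟩
        · exact Subfield.subset_closure ⟨q, by rw [hker0]; exact Algebra.mem_top, rfl⟩
      · intro _
        obtain ⟨p, q, hq, hrep⟩ := IsFractionRing.div_surjective (A := MvPolynomial ι k) h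
        have hq0 : q ≠ 0 := nonZeroDivisors.ne_zero hq
        have halgq : algebraMap (MvPolynomial ι k) (FractionRing (MvPolynomial ι k)) q ≠ 0 := by
          rw [Ne, IsFractionRing.to_map_eq_zero_iff]; exact hq0
        refine ⟨p, q, hq0, ?_, ?_⟩
        · rw [← hrep, div_mul_cancel₀ _ halgq]
        · show pbr b p u * q = p * pbr b q u
          rw [hpbr0, hpbr0, zero_mul, mul_zero]
  · have hex : ∃ i₀, lam (b i₀) ≠ 0 := by
      by_contra hno
      push_neg at hno
      refine hlam (b.ext fun i => ?_)
      rw [hno i]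
      simp
    obtain ⟨i₀, hc0⟩ := hex
    obtain ⟨hard1, hard2⟩ := aux_main b u lam hux hu0 i₀ hc0
    constructor
    · ext f
      simp only [Set.mem_setOf_eq, SetLike.mem_coe]
      exact ⟨fun h => hard1 f h, fun h => easy_dir b u lam hux h⟩
    · ext h
      simp only [Set.mem_setOf_eq, SetLike.mem_coe]
      constructor
      · rintro ⟨f, v, hv, hrep, hcond⟩
        obtain ⟨f₀, v₀, hv₀, hf₀m, hv₀m, heq⟩ := hard2 f v hv hcond
        have halgv : algebraMap (MvPolynomial ι k) (FractionRing (MvPolynomial ι k)) v ≠ 0 := by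
          rw [Ne, IsFractionRing.to_map_eq_zero_iff]; exact hv
        have halgv₀ : algebraMap (MvPolynomial ι k) (FractionRing (MvPolynomial ι k)) v₀ ≠ 0 := by
          rw [Ne, IsFractionRing.to_map_eq_zero_iff]; exact hv₀
        have hrep₀ : h * algebraMap (MvPolynomial ι k) (FractionRing (MvPolynomial ι k)) v₀ =
            algebraMap (MvPolynomial ι k) (FractionRing (MvPolynomial ι k)) f₀ := by
          apply mul_right_cancel₀ halgv
          calc h * algebraMap (MvPolynomial ι k) (FractionRing (MvPolynomial ι k)) v₀ *
                algebraMap (MvPolynomial ι k) (FractionRing (MvPolynomial ι k)) v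
              = h * algebraMap (MvPolynomial ι k) (FractionRing (MvPolynomial ι k)) v *
                algebraMap (MvPolynomial ι k) (FractionRing (MvPolynomial ι k)) v₀ := by ring
            _ = algebraMap (MvPolynomial ι k) (FractionRing (MvPolynomial ι k)) f *
                algebraMap (MvPolynomial ι k) (FractionRing (MvPolynomial ι k)) v₀ := by rw [hrep]
            _ = algebraMap (MvPolynomial ι k) (FractionRing (MvPolynomial ι k)) (f * v₀) := by
                rw [map_mul]
            _ = algebraMap (MvPolynomial ι k) (FractionRing (MvPolynomial ι k)) (f₀ * v) := by
                rw [heq]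
            _ = algebraMap (MvPolynomial ι k) (FractionRing (MvPolynomial ι k)) f₀ *
                algebraMap (MvPolynomial ι k) (FractionRing (MvPolynomial ι k)) v := by
                rw [map_mul]
        have hform : h = algebraMap (MvPolynomial ι k) (FractionRing (MvPolynomial ι k)) f₀ /
            algebraMap (MvPolynomial ι k) (FractionRing (MvPolynomial ι k)) v₀ := by
          rw [eq_div_iff halgv₀]
          exact hrep₀
        rw [hform]
        apply Subfield.div_mem
        · exact Subfield.subset_closure ⟨f₀, hf₀m, rfl⟩
        · exact Subfield.subset_closure ⟨v₀, hv₀m, rfl⟩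
      · intro hmemb
        have hle : ratSub b (LinearMap.ker lam) ≤ ratAnnSubfield (pbrDer b u) := by
          refine Subfield.closure_le.mpr ?_
          rintro _ ⟨p, hp, rfl⟩
          refine ⟨p, 1, one_ne_zero, by rw [map_one, mul_one], ?_⟩
          rw [pbrDer_apply, pbrDer_apply, easy_dir b u lam hux hp,
            easy_dir b u lam hux (one_mem _), zero_mul, mul_zero]
        have hmem2 := mem_ratAnnSubfield.mp (hle hmemb)
        have hfun : (fun f : MvPolynomial ι k => pbr b f u) = fun f => pbrDer b u f :=
          funext fun f => (pbrDer_apply b u f).symm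
        show ratAnn (fun f => pbr b f u) h
        rw [hfun]
        exact hmem2
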